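/- arXiv:1607.08297 — 7 statements merged into one kernel-verified Lean document; each statement's English description precedes it below -/
import Mathlib

section
/- Let Σ_X be a positive definite m×m real symmetric matrix, let D be symmetric with 0 ≺ D ≺ Σ_X, and let Θ be symmetric with 0 ⪯ Θ ⪯ Σ_X. Define Σ_S = (D⁻¹ − Σ_X⁻¹)⁻¹. Then det(Σ_X) / det(D·Σ_X⁻¹·(Σ_X − Θ) + Θ) = det(Σ_X + Σ_S) / det(Θ + Σ_S). -/
open Matrix

/-- Congruence by an invertible matrix preserves positive definiteness. -/
lemma posDef_conj_of_isUnit {n : Type*} [Fintype n] [DecidableEq n]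
    {A B : Matrix n n ℝ} (hA : A.PosDef) (hB : IsUnit B.det) :
    (Bᴴ * A * B).PosDef := by
  refine Matrix.PosDef.of_dotProduct_mulVec_pos (isHermitian_conjTranspose_mul_mul B hA.1) fun x hx => ?_
  have hBx : B *ᵥ x ≠ 0 := by
    have hinj := Matrix.mulVec_injective_iff_isUnit.mpr (isUnit_iff_isUnit_det B |>.2 hB)
    intro h
    exact hx (hinj (by simpa using h))
  simpa only [star_mulVec, dotProduct_mulVec, vecMul_vecMul] using hA.dotProduct_mulVec_pos hBx

/-- If `0 ≺ D ≺ SX` then `D⁻¹ - SX⁻¹` is positive definite. -/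
lemma inv_sub_inv_posDef {n : Type*} [Fintype n] [DecidableEq n]
    {SX D : Matrix n n ℝ} (hX : SX.PosDef) (hD : D.PosDef)
    (hXD : (SX - D).PosDef) : (D⁻¹ - SX⁻¹).PosDef := by
  have hXu : IsUnit SX.det := hX.det_pos.ne'.isUnit
  have hDu : IsUnit D.det := hD.det_pos.ne'.isUnit
  set N : Matrix n n ℝ := D⁻¹ - SX⁻¹ with hN
  have hNh : Nᴴ = N := (hD.isHermitian.inv.sub hX.isHermitian.inv).eq
  have key : N = Nᴴ * D * N + (SX⁻¹)ᴴ * (SX - D) * SX⁻¹ := by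
    rw [hNh, hX.isHermitian.inv.eq]
    have e1 : N * D = 1 - SX⁻¹ * D := by
      rw [hN, sub_mul, Matrix.nonsing_inv_mul D hDu]
    have e2 : SX⁻¹ * (SX - D) = 1 - SX⁻¹ * D := by
      rw [mul_sub, Matrix.nonsing_inv_mul SX hXu]
    rw [e1, e2, sub_mul, sub_mul, one_mul, one_mul, hN]
    rw [mul_sub, mul_assoc SX⁻¹ D, Matrix.mul_nonsing_inv D hDu, mul_one]
    abel
  rw [key]
  have h1 : (Nᴴ * D * N).PosSemidef := hD.posSemidef.conjTranspose_mul_mul_same N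
  have h2 : ((SX⁻¹)ᴴ * (SX - D) * SX⁻¹).PosDef :=
    posDef_conj_of_isUnit hXD hX.inv.det_pos.ne'.isUnit
  exact Matrix.PosDef.posSemidef_add h1 h2

set_option maxHeartbeats 1000000 in
/-- For `0 ≺ D ≺ Σ_X`, `0 ⪯ Θ ⪯ Σ_X` and `Σ_S = (D⁻¹ − Σ_X⁻¹)⁻¹`,
`det Σ_X / det(D·Σ_X⁻¹·(Σ_X − Θ) + Θ) = det(Σ_X + Σ_S)/det(Θ + Σ_S)`. -/
theorem stmt0 {m : ℕ} (SX D Th : Matrix (Fin m) (Fin m) ℝ)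
    (hX : SX.PosDef) (hD : D.PosDef) (hXD : (SX - D).PosDef)
    (hTh : Th.PosSemidef) (hXTh : (SX - Th).PosSemidef) :
    SX.det / (D * SX⁻¹ * (SX - Th) + Th).det
      = (SX + (D⁻¹ - SX⁻¹)⁻¹).det / (Th + (D⁻¹ - SX⁻¹)⁻¹).det := by
  have hA : (D⁻¹ - SX⁻¹).PosDef := inv_sub_inv_posDef hX hD hXD
  set A : Matrix (Fin m) (Fin m) ℝ := D⁻¹ - SX⁻¹ with hAdef
  have hXu : IsUnit SX.det := hX.det_pos.ne'.isUnit
  have hDu : IsUnit D.det := hD.det_pos.ne'.isUnit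
  have hAu : IsUnit A.det := hA.det_pos.ne'.isUnit
  -- Th + A⁻¹ is posdef
  have hThA : (Th + A⁻¹).PosDef := Matrix.PosDef.posSemidef_add hTh hA.inv
  -- key identity 1: D * SX⁻¹ * (SX - Th) + Th = D * A * (Th + A⁻¹)
  have key1 : D * SX⁻¹ * (SX - Th) + Th = D * A * (Th + A⁻¹) := by
    have hDA : D * A = 1 - D * SX⁻¹ := by
      rw [hAdef, mul_sub, Matrix.mul_nonsing_inv D hDu]
    rw [mul_add, mul_assoc D A A⁻¹, Matrix.mul_nonsing_inv A hAu, mul_one, hDA,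
      sub_mul, one_mul, mul_sub, mul_assoc, Matrix.nonsing_inv_mul SX hXu, mul_one]
    abel
  -- key identity 2: SX + A⁻¹ = A⁻¹ * (D⁻¹ * SX)
  have key2 : SX + A⁻¹ = A⁻¹ * D⁻¹ * SX := by
    have : A * SX = D⁻¹ * SX - 1 := by
      rw [hAdef, sub_mul, Matrix.nonsing_inv_mul SX hXu]
    calc SX + A⁻¹ = A⁻¹ * (A * SX + 1) := by
          rw [mul_add, ← mul_assoc, Matrix.nonsing_inv_mul A hAu, one_mul, mul_one]
      _ = A⁻¹ * D⁻¹ * SX := by rw [this, sub_add_cancel, mul_assoc]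
  rw [key1, key2]
  rw [det_mul, det_mul, det_mul, det_mul, Matrix.det_nonsing_inv, Matrix.det_nonsing_inv]
  simp only [Ring.inverse_eq_inv]
  have h1 : SX.det ≠ 0 := hX.det_pos.ne'
  have h2 : D.det ≠ 0 := hD.det_pos.ne'
  have h3 : A.det ≠ 0 := hA.det_pos.ne'
  have h4 : (Th + A⁻¹).det ≠ 0 := hThA.det_pos.ne'
  field_simp
end

section
/- Let Σ_X and Σ_N be positive definite m×m symmetric matrices and D a symmetric matrix with 0 ≺ D ⪯ Σ_X. Define Θ = (Σ_X⁻¹ + Σ_N⁻¹)⁻¹. Then det(D + Σ_N) / det(Σ_X + Σ_N) = det(D·Σ_X⁻¹·(Σ_X − Θ) + Θ) / det(Σ_X), i.e. (1/2)log(det(Σ_X)·det(D+Σ_N)/(det(D)·det(Σ_X+Σ_N))) = (1/2)log(det(Σ_X)·det(D·Σ_X⁻¹·(Σ_X−Θ)+Θ)/(det(D)·det(Σ_X))) after the substitution Θ = (Σ_X⁻¹+Σ_N⁻¹)⁻¹. -/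
open Matrix

/-- For `Σ_X, Σ_N ≻ 0`, `0 ≺ D ⪯ Σ_X`, and `Θ = (Σ_X⁻¹ + Σ_N⁻¹)⁻¹`,
`det(D + Σ_N)/det(Σ_X + Σ_N) = det(D·Σ_X⁻¹·(Σ_X − Θ) + Θ)/det Σ_X`. -/
theorem stmt1 {m : ℕ} (SX SN D : Matrix (Fin m) (Fin m) ℝ)
    (hX : SX.PosDef) (hN : SN.PosDef) (hD : D.PosDef) (hXD : (SX - D).PosSemidef) :
    (D + SN).det / (SX + SN).det
      = (D * SX⁻¹ * (SX - (SX⁻¹ + SN⁻¹)⁻¹) + (SX⁻¹ + SN⁻¹)⁻¹).det / SX.det := by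
  have hXS : (SX + SN).PosDef := hX.add hN
  have hXu : IsUnit SX.det := isUnit_iff_ne_zero.mpr (ne_of_gt hX.det_pos)
  have hNu : IsUnit SN.det := isUnit_iff_ne_zero.mpr (ne_of_gt hN.det_pos)
  have hSu : IsUnit (SX + SN).det := isUnit_iff_ne_zero.mpr (ne_of_gt hXS.det_pos)
  have h1 : SX⁻¹ + SN⁻¹ = SX⁻¹ * (SX + SN) * SN⁻¹ := by
    rw [Matrix.mul_add, Matrix.add_mul, Matrix.nonsing_inv_mul _ hXu, Matrix.one_mul,
      Matrix.mul_assoc, Matrix.mul_nonsing_inv _ hNu, Matrix.mul_one, add_comm]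
  have hTheta : (SX⁻¹ + SN⁻¹)⁻¹ = SN * (SX + SN)⁻¹ * SX := by
    rw [h1, Matrix.mul_inv_rev, Matrix.mul_inv_rev, Matrix.nonsing_inv_nonsing_inv _ hNu,
      Matrix.nonsing_inv_nonsing_inv _ hXu, Matrix.mul_assoc]
  have key : D * SX⁻¹ * (SX - (SX⁻¹ + SN⁻¹)⁻¹) + (SX⁻¹ + SN⁻¹)⁻¹
      = (D + SN) * (SX + SN)⁻¹ * SX := by
    have hSXmT : SX - (SX⁻¹ + SN⁻¹)⁻¹ = SX * (SX + SN)⁻¹ * SX := by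
      rw [hTheta]
      have : SX = (SX + SN) * (SX + SN)⁻¹ * SX := by
        rw [Matrix.mul_nonsing_inv _ hSu, Matrix.one_mul]
      nth_rewrite 1 [this]
      rw [Matrix.add_mul, Matrix.add_mul]
      abel
    rw [hSXmT, hTheta, show D * SX⁻¹ * (SX * (SX + SN)⁻¹ * SX)
        = D * (SX⁻¹ * SX) * ((SX + SN)⁻¹ * SX) by noncomm_ring,
      Matrix.nonsing_inv_mul _ hXu, Matrix.mul_one, Matrix.add_mul, Matrix.add_mul,
      Matrix.mul_assoc, Matrix.mul_assoc]
  rw [key, Matrix.det_mul, Matrix.det_mul, Matrix.det_nonsing_inv]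
  rw [Ring.inverse_eq_inv']
  rw [mul_div_cancel_right₀ _ (ne_of_gt hX.det_pos), div_eq_mul_inv]
end

section
/- Let Θ*_parent, Θ*_child, Σ_S be m×m symmetric matrices with Θ*_child + Σ_S invertible, and let M be symmetric with M·(Θ*_child − Θ*_parent) = (Θ*_child − Θ*_parent)·M = 0. Assume (Θ*_child + Σ_S)⁻¹ + M and (Θ*_parent + Σ_S)⁻¹ + M are invertible. Define Σ̃ = ((Θ*_child + Σ_S)⁻¹ + M)⁻¹ − Θ*_child. Then Θ*_parent + Σ̃ = ((Θ*_parent + Σ_S)⁻¹ + M)⁻¹. -/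
open Matrix

/-- key enhancement identity, eq. (22): if
`M·(Θ*_c − Θ*_p) = (Θ*_c − Θ*_p)·M = 0` and `Σ̃ = ((Θ*_c + Σ_S)⁻¹ + M)⁻¹ − Θ*_c`,
then `Θ*_p + Σ̃ = ((Θ*_p + Σ_S)⁻¹ + M)⁻¹`. -/
theorem stmt4 {m : ℕ} (Thp Thc SS M : Matrix (Fin m) (Fin m) ℝ)
    (hThp : Thp.IsHermitian) (hThc : Thc.IsHermitian) (hSS : SS.IsHermitian)
    (hM : M.IsHermitian)
    (hinvc : IsUnit (Thc + SS).det)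
    (hinv2c : IsUnit ((Thc + SS)⁻¹ + M).det)
    (hinv2p : IsUnit ((Thp + SS)⁻¹ + M).det)
    (hM1 : M * (Thc - Thp) = 0) (hM2 : (Thc - Thp) * M = 0) :
    Thp + (((Thc + SS)⁻¹ + M)⁻¹ - Thc) = ((Thp + SS)⁻¹ + M)⁻¹ := by
  set A := Thc + SS with hA
  set B := Thp + SS with hB
  set D := Thp - Thc with hD
  set C := A⁻¹ + M with hC
  have hDneg : D = -(Thc - Thp) := by rw [hD]; abel
  have hMD : M * D = 0 := by rw [hDneg, Matrix.mul_neg, hM1, neg_zero]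
  have hDM : D * M = 0 := by rw [hDneg, Matrix.neg_mul, hM2, neg_zero]
  -- B is invertible
  have hinvp : IsUnit B.det := by
    by_contra hB0
    have hB0' : B⁻¹ = 0 := Matrix.nonsing_inv_apply_not_isUnit B hB0
    have hMu : IsUnit M.det := by
      have := hinv2p
      rwa [show (Thp + SS)⁻¹ = B⁻¹ from rfl, hB0', zero_add] at this
    have hD0 : Thc - Thp = 0 := by
      have := congrArg (fun X => M⁻¹ * X) hM1
      simpa [← mul_assoc, Matrix.nonsing_inv_mul M hMu] using this
    have : B = A := by
      rw [hA, hB]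
      have : Thc = Thp := by linear_combination (norm := abel) hD0
      rw [this]
    rw [this] at hB0
    exact hB0 hinvc
  -- key computation
  have key : (B⁻¹ + M) * (D + C⁻¹) = 1 := by
    have hCC : C⁻¹ * C = 1 := Matrix.nonsing_inv_mul C hinv2c
    have hBA : B⁻¹ * B * A⁻¹ = A⁻¹ := by
      rw [Matrix.nonsing_inv_mul B hinvp, one_mul]
    have h1 : (B⁻¹ + M) * (D + C⁻¹) * C = C := by
      have hDC : D * C = D * A⁻¹ := by
        rw [hC, mul_add, hDM, add_zero]
      have hDA : B⁻¹ * (D * A⁻¹) + B⁻¹ = A⁻¹ := by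
        have h2 : (D + A) * A⁻¹ = D * A⁻¹ + 1 := by
          rw [add_mul, Matrix.mul_nonsing_inv A hinvc]
        have : B⁻¹ * (D * A⁻¹) + B⁻¹ = B⁻¹ * ((D + A) * A⁻¹) := by
          rw [h2, mul_add, mul_one]
        rw [this, show D + A = B by rw [hD, hA, hB]; abel, ← mul_assoc, hBA]
      calc (B⁻¹ + M) * (D + C⁻¹) * C
          = (B⁻¹ + M) * (D * C + C⁻¹ * C) := by noncomm_ring
        _ = (B⁻¹ + M) * (D * A⁻¹ + 1) := by rw [hDC, hCC]
        _ = B⁻¹ * (D * A⁻¹) + B⁻¹ + (M * D * A⁻¹ + M) := by noncomm_ring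
        _ = A⁻¹ + M := by rw [hMD, hDA, Matrix.zero_mul, zero_add]
        _ = C := hC.symm
    calc (B⁻¹ + M) * (D + C⁻¹)
        = (B⁻¹ + M) * (D + C⁻¹) * C * C⁻¹ := by
          rw [mul_assoc, Matrix.mul_nonsing_inv C hinv2c, mul_one]
      _ = C * C⁻¹ := by rw [h1]
      _ = 1 := Matrix.mul_nonsing_inv C hinv2c
  have := Matrix.inv_eq_right_inv key
  rw [show Thp + (C⁻¹ - Thc) = D + C⁻¹ by rw [hD]; abel]
  exact this.symm
end

section
/- Let Θ*, Σ_S be m×m symmetric matrices with Σ_S ≻ 0 and Θ* + Σ_S invertible, and let M be a positive semidefinite symmetric matrix satisfying M·Θ* = Θ*·M = 0. Assume (Θ* + Σ_S)⁻¹ + M is invertible. Then Σ̃ := ((Θ* + Σ_S)⁻¹ + M)⁻¹ − Θ* equals (Σ_S⁻¹ + M)⁻¹, and in particular Σ̃ ≻ 0. -/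
open Matrix

/-- with `Σ_S ≻ 0`, `M ⪰ 0`, `M·Θ* = Θ*·M = 0`, the enhanced covariance
`Σ̃ = ((Θ* + Σ_S)⁻¹ + M)⁻¹ − Θ*` equals `(Σ_S⁻¹ + M)⁻¹` and is positive definite. -/
theorem stmt5 {m : ℕ} (Th SS M : Matrix (Fin m) (Fin m) ℝ)
    (hTh : Th.IsHermitian) (hSS : SS.PosDef) (hM : M.PosSemidef)
    (hinv : IsUnit (Th + SS).det)
    (hinv2 : IsUnit ((Th + SS)⁻¹ + M).det)
    (hMTh : M * Th = 0) (hThM : Th * M = 0) :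
    ((Th + SS)⁻¹ + M)⁻¹ - Th = (SS⁻¹ + M)⁻¹ ∧
      (((Th + SS)⁻¹ + M)⁻¹ - Th).PosDef := by
  have hB : (SS⁻¹ + M).PosDef := hSS.inv.add_posSemidef hM
  have hSSdet : IsUnit SS.det := isUnit_iff_ne_zero.mpr (ne_of_gt hSS.det_pos)
  have hBdet : IsUnit (SS⁻¹ + M).det := isUnit_iff_ne_zero.mpr (ne_of_gt hB.det_pos)
  set B := SS⁻¹ + M with hBdef
  -- SS * M * B⁻¹ = SS - B⁻¹
  have hSSB : SS * B = 1 + SS * M := by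
    rw [hBdef, mul_add, Matrix.mul_nonsing_inv SS hSSdet]
  have hSSMB : SS * M * B⁻¹ = SS - B⁻¹ := by
    have : (1 + SS * M) * B⁻¹ = SS * B * B⁻¹ := by rw [hSSB]
    rw [Matrix.mul_assoc, Matrix.mul_nonsing_inv B hBdet, Matrix.mul_one, add_mul,
      Matrix.one_mul] at this
    linear_combination (norm := noncomm_ring) this
  -- key: (Th+SS) * (((Th+SS)⁻¹ + M) * (B⁻¹ + Th)) = Th + SS
  have key : (Th + SS) * (((Th + SS)⁻¹ + M) * (B⁻¹ + Th)) = Th + SS := by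
    rw [← Matrix.mul_assoc, mul_add (Th + SS), Matrix.mul_nonsing_inv _ hinv]
    have h1 : (Th + SS) * M = SS * M := by rw [add_mul, hThM, zero_add]
    rw [h1, add_mul, Matrix.one_mul, mul_add, hSSMB, Matrix.mul_assoc, hMTh,
      Matrix.mul_zero]
    abel
  have key2 : ((Th + SS)⁻¹ + M) * (B⁻¹ + Th) = 1 := by
    have := congrArg (fun X => (Th + SS)⁻¹ * X) key
    simpa [← Matrix.mul_assoc, Matrix.nonsing_inv_mul _ hinv] using this
  have hinveq : ((Th + SS)⁻¹ + M)⁻¹ = B⁻¹ + Th := Matrix.inv_eq_right_inv key2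
  have heq : ((Th + SS)⁻¹ + M)⁻¹ - Th = B⁻¹ := by rw [hinveq]; abel
  exact ⟨heq, heq ▸ hB.inv⟩
end

section
/- Let Θ*, Σ_S be m×m symmetric matrices with Θ* + Σ_S invertible, and let M be symmetric with M·Θ* = Θ*·M = 0. Set Σ̃ = ((Θ* + Σ_S)⁻¹ + M)⁻¹ − Θ* and assume Σ_S and Σ̃ are invertible. Then Σ̃⁻¹·(Θ* + Σ̃) = Σ_S⁻¹·(Θ* + Σ_S). -/
open Matrix

/-- property (26) of the enhancement lemma:
`Σ̃⁻¹·(Θ* + Σ̃) = Σ_S⁻¹·(Θ* + Σ_S)` where `Σ̃ = ((Θ* + Σ_S)⁻¹ + M)⁻¹ − Θ*`. -/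
theorem stmt6 {m : ℕ} (Th SS M : Matrix (Fin m) (Fin m) ℝ)
    (hTh : Th.IsHermitian) (hSS : SS.IsHermitian) (hM : M.IsHermitian)
    (hinv : IsUnit (Th + SS).det)
    (hMTh : M * Th = 0) (hThM : Th * M = 0)
    (hSSinv : IsUnit SS.det)
    (hSt : IsUnit (((Th + SS)⁻¹ + M)⁻¹ - Th).det) :
    (((Th + SS)⁻¹ + M)⁻¹ - Th)⁻¹ * (Th + (((Th + SS)⁻¹ + M)⁻¹ - Th))
      = SS⁻¹ * (Th + SS) := by
  set A := Th + SS with hA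
  set B := A⁻¹ + M with hB
  have hSS1 : SS * SS⁻¹ = 1 := mul_nonsing_inv _ hSSinv
  have hSS2 : SS⁻¹ * SS = 1 := nonsing_inv_mul _ hSSinv
  have hAinv : A⁻¹ * A = 1 := nonsing_inv_mul _ hinv
  -- B is invertible
  have hBdet : IsUnit B.det := by
    by_contra h
    have hB0 : B⁻¹ = 0 := nonsing_inv_apply_not_isUnit _ h
    have hThdet : IsUnit Th.det := by
      have h2 := hSt
      rw [hB0, zero_sub, det_neg] at h2
      exact (IsUnit.mul_iff.mp h2).2
    have hM0 : M = 0 := by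
      have : M * (Th * Th⁻¹) = 0 := by rw [← mul_assoc, hMTh, zero_mul]
      rwa [mul_nonsing_inv _ hThdet, mul_one] at this
    have : B = A⁻¹ := by rw [hB, hM0, add_zero]
    exact h (this ▸ isUnit_nonsing_inv_det _ hinv)
  have hB1 : B⁻¹ * B = 1 := nonsing_inv_mul _ hBdet
  -- key computation
  have key0 : B * (A * SS⁻¹ * Th) = SS⁻¹ * Th := by
    have hMA : M * A = M * SS := by rw [hA, mul_add, hMTh, zero_add]
    calc B * (A * SS⁻¹ * Th)
        = A⁻¹ * A * SS⁻¹ * Th + M * A * SS⁻¹ * Th := by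
          rw [hB]; noncomm_ring
      _ = SS⁻¹ * Th + M * Th := by
          rw [hAinv, one_mul, hMA, mul_assoc (M * SS), mul_assoc M SS,
            ← mul_assoc SS SS⁻¹, hSS1, one_mul]
      _ = SS⁻¹ * Th := by rw [hMTh, add_zero]
  have key1 : B⁻¹ * (SS⁻¹ * Th) = A * SS⁻¹ * Th := by
    rw [← key0, ← mul_assoc, hB1, one_mul]
  have hASSTh : A * SS⁻¹ * Th = Th * (SS⁻¹ * Th) + Th := by
    rw [hA, add_mul, add_mul, hSS1, one_mul, mul_assoc]
  have hSSA : SS⁻¹ * A = SS⁻¹ * Th + 1 := by rw [hA, mul_add, hSS2]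
  have keymain : (B⁻¹ - Th) * (SS⁻¹ * A) = B⁻¹ := by
    calc (B⁻¹ - Th) * (SS⁻¹ * A)
        = B⁻¹ * (SS⁻¹ * Th) + B⁻¹ - (Th * (SS⁻¹ * Th) + Th) := by
          rw [hSSA]; noncomm_ring
      _ = B⁻¹ := by rw [key1, hASSTh]; abel
  have hsum : Th + (B⁻¹ - Th) = B⁻¹ := by abel
  rw [hsum]
  calc (B⁻¹ - Th)⁻¹ * B⁻¹
      = (B⁻¹ - Th)⁻¹ * ((B⁻¹ - Th) * (SS⁻¹ * A)) := by rw [keymain]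
    _ = SS⁻¹ * A := by rw [← mul_assoc, nonsing_inv_mul _ hSt, one_mul]
end

section
/- Let Θ_p, Θ_c, Σ_S be m×m symmetric matrices with Θ_c + Σ_S and Θ_p + Σ_S invertible, and let M be symmetric with M·(Θ_c − Θ_p) = (Θ_c − Θ_p)·M = 0. Set Σ̃ = ((Θ_c + Σ_S)⁻¹ + M)⁻¹ − Θ_c and assume Θ_p + Σ̃ is invertible. Then (Θ_p + Σ̃)⁻¹·(Θ_c + Σ̃) = (Θ_p + Σ_S)⁻¹·(Θ_c + Σ_S). -/
open Matrix

/-- properties (27)/(28) of the enhancement lemma: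
`(Θ_p + Σ̃)⁻¹·(Θ_c + Σ̃) = (Θ_p + Σ_S)⁻¹·(Θ_c + Σ_S)` where
`Σ̃ = ((Θ_c + Σ_S)⁻¹ + M)⁻¹ − Θ_c`. -/
theorem stmt7 {m : ℕ} (Thp Thc SS M : Matrix (Fin m) (Fin m) ℝ)
    (hThp : Thp.IsHermitian) (hThc : Thc.IsHermitian) (hSS : SS.IsHermitian)
    (hM : M.IsHermitian)
    (hinvc : IsUnit (Thc + SS).det) (hinvp : IsUnit (Thp + SS).det)
    (hM1 : M * (Thc - Thp) = 0) (hM2 : (Thc - Thp) * M = 0)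
    (hinvt : IsUnit (Thp + (((Thc + SS)⁻¹ + M)⁻¹ - Thc)).det) :
    (Thp + (((Thc + SS)⁻¹ + M)⁻¹ - Thc))⁻¹ * (Thc + (((Thc + SS)⁻¹ + M)⁻¹ - Thc))
      = (Thp + SS)⁻¹ * (Thc + SS) := by
  set A := Thc + SS with hA
  set B := Thp + SS with hB
  set D := Thc - Thp with hD
  set N := (A⁻¹ + M)⁻¹ with hN
  have hBAD : B = A - D := by rw [hA, hB, hD]; abel
  have hTp : Thp + (N - Thc) = N - D := by rw [hD]; abel
  have hTc : Thc + (N - Thc) = N := by abel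
  rw [hTp, hTc]
  rw [hTp] at hinvt
  by_cases hU : IsUnit (A⁻¹ + M).det
  · have hNdet : IsUnit N.det := isUnit_nonsing_inv_det _ hU
    have hNinv : N⁻¹ = A⁻¹ + M := by rw [hN, nonsing_inv_nonsing_inv _ hU]
    have hNN : N * (A⁻¹ + M) = 1 := by
      rw [← hNinv]; exact mul_nonsing_inv _ hNdet
    have hNA : N * A⁻¹ = 1 - N * M := by
      have h := hNN
      rw [mul_add] at h
      exact eq_sub_of_add_eq h
    have key : N - D = N * A⁻¹ * B := by
      symm
      calc N * A⁻¹ * B = N * (A⁻¹ * A) - N * A⁻¹ * D := by rw [hBAD]; noncomm_ring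
        _ = N - (1 - N * M) * D := by rw [nonsing_inv_mul _ hinvc, mul_one, hNA]
        _ = N - D := by rw [sub_mul, one_mul, mul_assoc, hM1, mul_zero, sub_zero]
    rw [key, Matrix.mul_inv_rev, Matrix.mul_inv_rev, nonsing_inv_nonsing_inv _ hinvc,
      mul_assoc, mul_assoc, nonsing_inv_mul _ hNdet, mul_one]
  · have hN0 : N = 0 := by rw [hN, nonsing_inv_apply_not_isUnit _ hU]
    rw [hN0] at hinvt
    have hDdet : IsUnit D.det := by
      have : (0 : Matrix (Fin m) (Fin m) ℝ) - D = -D := by abel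
      rw [this, det_neg] at hinvt
      exact (isUnit_of_mul_isUnit_right hinvt)
    have hM0 : M = 0 := by
      calc M = M * (D * D⁻¹) := by rw [mul_nonsing_inv _ hDdet, mul_one]
        _ = M * D * D⁻¹ := by rw [mul_assoc]
        _ = 0 := by rw [hM1, zero_mul]
    exact absurd (by rw [hM0, add_zero]; exact isUnit_nonsing_inv_det _ hinvc) hU
end

section
/- Let Γ be a 2m×2m positive definite symmetric block matrix with m×m blocks, let Σ̃₀ be symmetric m×m with Σ̃₀⁻¹ = (I,I)·Γ⁻¹·(I,I)ᵀ, let Λ = Γ − [[Σ̃₀, Σ̃₀],[Σ̃₀, Σ̃₀]], and define (H₁, H₂) = (Σ̃₀, Σ̃₀)·Γ⁻¹. Then (H₁, H₂)·Λ·(H₁, H₂)ᵀ = 0. -/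
open Matrix

/-- second part of Lemma 4: with `Γ ≻ 0`,
`Σ̃₀⁻¹ = (I,I)·Γ⁻¹·(I,I)ᵀ`, `Λ = Γ − [[Σ̃₀, Σ̃₀],[Σ̃₀, Σ̃₀]]`, and
`(H₁, H₂) = (Σ̃₀, Σ̃₀)·Γ⁻¹`, we have `(H₁, H₂)·Λ·(H₁, H₂)ᵀ = 0`. -/
theorem stmt11 {m : ℕ} (G : Matrix (Fin m ⊕ Fin m) (Fin m ⊕ Fin m) ℝ)
    (S0 : Matrix (Fin m) (Fin m) ℝ)
    (hG : G.PosDef) (hS0 : S0.IsHermitian)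
    (hS0inv : S0⁻¹ = fromCols (1 : Matrix (Fin m) (Fin m) ℝ) (1 : Matrix (Fin m) (Fin m) ℝ) * G⁻¹ * (fromCols (1 : Matrix (Fin m) (Fin m) ℝ) (1 : Matrix (Fin m) (Fin m) ℝ))ᵀ) :
    fromCols (toCols₁ (fromCols S0 S0 * G⁻¹)) (toCols₂ (fromCols S0 S0 * G⁻¹))
        * (G - fromBlocks S0 S0 S0 S0)
        * (fromCols (toCols₁ (fromCols S0 S0 * G⁻¹))
            (toCols₂ (fromCols S0 S0 * G⁻¹)))ᵀ
      = 0 := by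
  set E : Matrix (Fin m) (Fin m ⊕ Fin m) ℝ := fromCols 1 1 with hE
  have hGi : (G⁻¹).PosDef := hG.inv
  have hGiT : (G⁻¹)ᵀ = G⁻¹ := by
    rw [← conjTranspose_eq_transpose_of_trivial]; exact hGi.1
  have hS0T : S0ᵀ = S0 := by
    rw [← conjTranspose_eq_transpose_of_trivial]; exact hS0
  -- S0⁻¹ is positive definite
  have hSinvPD : (S0⁻¹).PosDef := by
    rw [hS0inv]
    refine posDef_iff_dotProduct_mulVec.mpr ⟨?_, ?_⟩
    · rw [IsHermitian, conjTranspose_eq_transpose_of_trivial, transpose_mul, transpose_mul,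
        transpose_transpose, hGiT, Matrix.mul_assoc]
    · intro x hx
      have hy : Eᵀ *ᵥ x ≠ 0 := by
        obtain ⟨i, hi⟩ : ∃ i, x i ≠ 0 := by
          by_contra h
          push_neg at h
          exact hx (funext h)
        intro h
        apply hi
        have := congrFun h (Sum.inl i)
        simpa [hE, transpose_fromCols, fromRows_mulVec] using this
      have key : star x ⬝ᵥ (E * G⁻¹ * Eᵀ) *ᵥ x
          = star (Eᵀ *ᵥ x) ⬝ᵥ G⁻¹ *ᵥ (Eᵀ *ᵥ x) := by
        simp only [star_trivial, ← mulVec_mulVec, dotProduct_mulVec, ← mulVec_transpose]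
      rw [key]
      exact hGi.dotProduct_mulVec_pos hy
  have hSPD : S0.PosDef := Matrix.posDef_inv_iff.mp hSinvPD
  have hSdet : IsUnit S0.det := hSPD.det_pos.ne'.isUnit
  have hGdet : IsUnit G.det := hG.det_pos.ne'.isUnit
  have hGG : G⁻¹ * G = 1 := nonsing_inv_mul G hGdet
  have hA1 : S0 * (E * G⁻¹ * Eᵀ) = 1 := by
    rw [← hS0inv]; exact mul_nonsing_inv S0 hSdet
  have hA2 : (E * G⁻¹ * Eᵀ) * S0 = 1 := by
    rw [← hS0inv]; exact nonsing_inv_mul S0 hSdet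
  rw [fromCols_toCols]
  have hC : fromCols S0 S0 = S0 * E := by
    rw [hE, mul_fromCols, mul_one]
  have hBlk : fromBlocks S0 S0 S0 S0 = Eᵀ * (S0 * E) := by
    rw [hE, transpose_fromCols, transpose_one, ← Matrix.mul_assoc, fromRows_mul,
      Matrix.one_mul, fromRows_mul_fromCols, Matrix.mul_one]
  rw [hC, hBlk]
  have hT : (S0 * E * G⁻¹)ᵀ = G⁻¹ * Eᵀ * S0 := by
    rw [transpose_mul, transpose_mul, hGiT, hS0T, Matrix.mul_assoc]
  rw [hT, Matrix.mul_sub, Matrix.sub_mul]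
  have e1 : S0 * E * G⁻¹ * G * (G⁻¹ * Eᵀ * S0) = S0 := by
    calc S0 * E * G⁻¹ * G * (G⁻¹ * Eᵀ * S0)
        = S0 * E * (G⁻¹ * G) * G⁻¹ * Eᵀ * S0 := by
          simp only [Matrix.mul_assoc]
      _ = S0 * (E * G⁻¹ * Eᵀ) * S0 := by
          rw [hGG, Matrix.mul_one]; simp only [Matrix.mul_assoc]
      _ = S0 := by rw [hA1, Matrix.one_mul]
  have e2 : S0 * E * G⁻¹ * (Eᵀ * (S0 * E)) * (G⁻¹ * Eᵀ * S0) = S0 := by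
    calc S0 * E * G⁻¹ * (Eᵀ * (S0 * E)) * (G⁻¹ * Eᵀ * S0)
        = S0 * (E * G⁻¹ * Eᵀ) * (S0 * (E * G⁻¹ * Eᵀ)) * S0 := by
          simp only [Matrix.mul_assoc]
      _ = S0 := by rw [hA1]; simp
  rw [e1, e2, sub_self]
end
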